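/- arXiv:2105.01049 — 5 statements merged into one kernel-verified Lean document; each statement's English description precedes it below -/
import Mathlib

section
/- (No-Free-Lunch theorem for learning linear optical unitaries from coherent-state training data.) Let m ≥ 1, let 0 ≤ k ≤ 2m, and fix any O ∈ O(2m). For Y ∈ O(2m−k), let T_Y := (I_k ⊕ Y)·O ∈ O(2m); these are exactly the orthogonal matrices that agree with O on the k-dimensional subspace spanned by the first k standard basis row vectors transported appropriately, corresponding to a learner that matches the target O perfectly on k linearly independent coherent-state training vectors. Then the Haar average of the risk satisfies ∫_{O(2m−k)} R_O(T_Y) dμ(Y) = 1/2 − k/(4m), where R_O(T) = 1/2 − Tr(T Oᵀ)/(4m). -/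
open MeasureTheory Matrix

instance matrixMeasurableSpace (n m : ℕ) : MeasurableSpace (Matrix (Fin n) (Fin m) ℝ) :=
  MeasurableSpace.pi

instance matrixBorelSpace (n m : ℕ) : BorelSpace (Matrix (Fin n) (Fin m) ℝ) :=
  Pi.borelSpace

set_option synthInstance.maxHeartbeats 1000000 in
instance nflBorel (n : ℕ) : BorelSpace (Matrix.orthogonalGroup (Fin n) ℝ) :=
  Subtype.borelSpace _

private lemma nfl_trace_reindex_fromBlocks {k j N : ℕ} (e : Fin k ⊕ Fin j ≃ Fin N)
    (A : Matrix (Fin k) (Fin k) ℝ) (D : Matrix (Fin j) (Fin j) ℝ) :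
    (Matrix.reindex e e (Matrix.fromBlocks A 0 0 D)).trace = A.trace + D.trace := by
  rw [Matrix.trace, Matrix.trace, Matrix.trace]
  simp only [Matrix.reindex_apply, Matrix.diag, Matrix.submatrix_apply]
  rw [← Equiv.sum_comp e (fun i => Matrix.fromBlocks A 0 0 D (e.symm i) (e.symm i))]
  simp [Fintype.sum_sum_type, Matrix.fromBlocks]

private lemma nfl_continuous_trace (n : ℕ) :
    Continuous (fun Y : Matrix.orthogonalGroup (Fin n) ℝ =>
      ((Y : Matrix (Fin n) (Fin n) ℝ)).trace) := by
  show Continuous fun Y : Matrix.orthogonalGroup (Fin n) ℝ =>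
    ∑ i, ((Y : Matrix (Fin n) (Fin n) ℝ) i i)
  exact continuous_finset_sum _
    (fun i _ => ((continuous_apply_apply i i).comp continuous_subtype_val))

private lemma nfl_trace_bound (n : ℕ) (Y : Matrix.orthogonalGroup (Fin n) ℝ) :
    ‖((Y : Matrix (Fin n) (Fin n) ℝ)).trace‖ ≤ (n : ℝ) := by
  set A : Matrix (Fin n) (Fin n) ℝ := (Y : Matrix (Fin n) (Fin n) ℝ)
  have hA : A * star A = 1 := (Matrix.mem_orthogonalGroup_iff (Fin n) ℝ).mp Y.2
  have hrow : ∀ i, ∑ j, A i j ^ 2 = 1 := by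
    intro i
    have := congrFun (congrFun hA i) i
    simpa [Matrix.mul_apply, Matrix.one_apply, sq] using this
  have hdiag : ∀ i, |A i i| ≤ 1 := by
    intro i
    have h1 : A i i ^ 2 ≤ 1 := by
      rw [← hrow i]
      exact Finset.single_le_sum (fun j _ => sq_nonneg (A i j)) (Finset.mem_univ i)
    rw [abs_le]; constructor <;> nlinarith [h1]
  calc ‖A.trace‖ = |∑ i, A i i| := rfl
    _ ≤ ∑ i, |A i i| := Finset.abs_sum_le_sum_abs _ _
    _ ≤ ∑ _i : Fin n, (1 : ℝ) := Finset.sum_le_sum (fun i _ => hdiag i)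
    _ = (n : ℝ) := by simp

private lemma nfl_integrable_trace (n : ℕ) (μ : Measure (Matrix.orthogonalGroup (Fin n) ℝ))
    [IsProbabilityMeasure μ] :
    Integrable (fun Y : Matrix.orthogonalGroup (Fin n) ℝ =>
      ((Y : Matrix (Fin n) (Fin n) ℝ)).trace) μ := by
  refine Integrable.mono' (integrable_const (n : ℝ))
    (nfl_continuous_trace n).measurable.aestronglyMeasurable
    (ae_of_all _ fun Y => nfl_trace_bound n Y)

private lemma nfl_integral_trace_zero (n : ℕ)
    (μ : Measure (Matrix.orthogonalGroup (Fin n) ℝ)) [μ.IsHaarMeasure]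
    [IsProbabilityMeasure μ] :
    ∫ Y : Matrix.orthogonalGroup (Fin n) ℝ,
      ((Y : Matrix (Fin n) (Fin n) ℝ)).trace ∂μ = 0 := by
  have hneg : (-1 : Matrix (Fin n) (Fin n) ℝ) ∈ Matrix.orthogonalGroup (Fin n) ℝ := by
    simp [Matrix.mem_orthogonalGroup_iff]
  set g : Matrix.orthogonalGroup (Fin n) ℝ := ⟨-1, hneg⟩
  have h := integral_mul_left_eq_self (μ := μ)
    (fun Y : Matrix.orthogonalGroup (Fin n) ℝ => ((Y : Matrix (Fin n) (Fin n) ℝ)).trace) g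
  have h2 : ∀ Y : Matrix.orthogonalGroup (Fin n) ℝ,
      (((g * Y : Matrix.orthogonalGroup (Fin n) ℝ) : Matrix (Fin n) (Fin n) ℝ)).trace
      = - ((Y : Matrix (Fin n) (Fin n) ℝ)).trace := by
    intro Y
    have : ((g * Y : Matrix.orthogonalGroup (Fin n) ℝ) : Matrix (Fin n) (Fin n) ℝ)
        = -(Y : Matrix (Fin n) (Fin n) ℝ) := by
      simp [g]
    rw [this, Matrix.trace_neg]
  simp_rw [h2, integral_neg] at h
  linarith

/-- **No-Free-Lunch theorem for learning linear optical unitaries from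
coherent-state training data.**
Let `m ≥ 1`, `0 ≤ k ≤ 2m`, and fix `O ∈ O(2m)`.  For `Y ∈ O(2m−k)`, the
hypothesis `T_Y := (I_k ⊕ Y) · O` agrees with the target `O` on the
`k`-dimensional subspace spanned by `k` linearly independent coherent-state
training vectors.  Averaging the risk `R_O(T) = 1/2 − Tr(T Oᵀ)/(4m)` over the
Haar probability measure on `O(2m−k)` gives `1/2 − k/(4m)`. -/
theorem nfl_linear_optical_coherent_states
    (m k : ℕ) (hm : 1 ≤ m) (hk : k ≤ 2 * m)
    (O : Matrix (Fin (2 * m)) (Fin (2 * m)) ℝ)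
    (hO : O ∈ Matrix.orthogonalGroup (Fin (2 * m)) ℝ)
    (μ : Measure (Matrix.orthogonalGroup (Fin (2 * m - k)) ℝ))
    [μ.IsHaarMeasure] [IsProbabilityMeasure μ] :
    ∫ Y, (1 / 2 -
        ((Matrix.reindex (finSumFinEquiv.trans (finCongr (Nat.add_sub_cancel' hk)))
            (finSumFinEquiv.trans (finCongr (Nat.add_sub_cancel' hk)))
            (Matrix.fromBlocks (1 : Matrix (Fin k) (Fin k) ℝ) 0 0
              ((Y : Matrix (Fin (2 * m - k)) (Fin (2 * m - k)) ℝ)))) * O * Oᵀ).trace /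
          (4 * m)) ∂μ
      = 1 / 2 - k / (4 * m) := by
  have hOOt : O * Oᵀ = 1 := by
    have := (Matrix.mem_orthogonalGroup_iff (Fin (2 * m)) ℝ).mp hO
    simpa using this
  set e := (finSumFinEquiv.trans (finCongr (Nat.add_sub_cancel' hk)))
  have htr : ∀ Y : Matrix.orthogonalGroup (Fin (2 * m - k)) ℝ,
      ((Matrix.reindex e e
          (Matrix.fromBlocks (1 : Matrix (Fin k) (Fin k) ℝ) 0 0
            ((Y : Matrix (Fin (2 * m - k)) (Fin (2 * m - k)) ℝ)))) * O * Oᵀ).trace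
      = (k : ℝ) + ((Y : Matrix (Fin (2 * m - k)) (Fin (2 * m - k)) ℝ)).trace := by
    intro Y
    rw [mul_assoc, hOOt, mul_one, nfl_trace_reindex_fromBlocks]
    simp [Matrix.trace_one]
  simp_rw [htr]
  have hint := nfl_integrable_trace (2 * m - k) μ
  have hzero := nfl_integral_trace_zero (2 * m - k) μ
  have h4m : (4 : ℝ) * m ≠ 0 := by positivity
  have : ∫ Y, ((1 : ℝ) / 2 -
      ((k : ℝ) + ((Y : Matrix (Fin (2 * m - k)) (Fin (2 * m - k)) ℝ)).trace) / (4 * m)) ∂μ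
      = ∫ Y, ((1 : ℝ) / 2 - (k : ℝ) / (4 * m) -
        ((Y : Matrix (Fin (2 * m - k)) (Fin (2 * m - k)) ℝ)).trace / (4 * (m : ℝ))) ∂μ := by
    congr 1
    funext Y
    rw [add_div]; ring
  rw [this, integral_sub (integrable_const _) (hint.div_const _)]
  rw [integral_const, integral_div, hzero]
  simp
end

section
/- (Entanglement-assisted No-Free-Lunch theorem for learning linear optical unitaries from entangled coherent-Fock training data.) Let m ≥ 1 and let r, s ≥ 1 be integers with r·s ≤ 2m. Fix any O ∈ O(2m). For Y ∈ O(2m − rs), let T_Y := (I_{rs} ⊕ Y)·O ∈ O(2m); these correspond to a learner whose output agrees with the target O on the rs-dimensional subspace spanned by the rs linearly independent mean vectors appearing in s entangled coherent-Fock training states of rank r. Then ∫_{O(2m−rs)} R_O(T_Y) dμ(Y) = 1/2 − rs/(4m), where R_O(T) = 1/2 − Tr(T Oᵀ)/(4m). -/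
open MeasureTheory Matrix

lemma trace_reindex_fromBlocks {a b c : ℕ} (e : Fin a ⊕ Fin b ≃ Fin c)
    (M : Matrix (Fin a) (Fin a) ℝ) (N : Matrix (Fin b) (Fin b) ℝ) :
    (Matrix.reindex e e (Matrix.fromBlocks M 0 0 N)).trace = M.trace + N.trace := by
  rw [Matrix.trace, Matrix.trace, Matrix.trace]
  rw [← Equiv.sum_comp e (fun i => (Matrix.reindex e e (Matrix.fromBlocks M 0 0 N)).diag i)]
  simp [Matrix.diag, Fintype.sum_sum_type]

lemma orthogonalGroup_compactSpace (n : ℕ) :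
    CompactSpace (Matrix.orthogonalGroup (Fin n) ℝ) := by
  suffices h : IsCompact (Matrix.orthogonalGroup (Fin n) ℝ : Set (Matrix (Fin n) (Fin n) ℝ)) from
    isCompact_iff_compactSpace.mp h
  have hK : IsCompact {A : Matrix (Fin n) (Fin n) ℝ | ∀ i j, A i j ∈ Set.Icc (-1 : ℝ) 1} := by
    have : {A : Matrix (Fin n) (Fin n) ℝ | ∀ i j, A i j ∈ Set.Icc (-1 : ℝ) 1}
        = Set.pi Set.univ (fun _ : Fin n => Set.pi Set.univ
            fun _ : Fin n => Set.Icc (-1 : ℝ) 1) := by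
      ext A
      exact ⟨fun h i _ j _ => h i j, fun h i j => h i trivial j trivial⟩
    rw [this]
    exact isCompact_univ_pi fun _ => isCompact_univ_pi fun _ => isCompact_Icc
  apply hK.of_isClosed_subset
  · have : (Matrix.orthogonalGroup (Fin n) ℝ : Set (Matrix (Fin n) (Fin n) ℝ))
        = {A | A * Aᵀ = 1} := by
      ext A
      rw [SetLike.mem_coe, Matrix.mem_orthogonalGroup_iff]
      simp [Matrix.star_eq_conjTranspose]
    rw [this]
    exact isClosed_eq (continuous_id.matrix_mul continuous_id.matrix_transpose)
      continuous_const
  · intro A hA i j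
    have := entry_norm_bound_of_unitary (𝕜 := ℝ) hA i j
    rw [Real.norm_eq_abs, abs_le] at this
    exact this

lemma integral_trace_orthogonal (n : ℕ)
    (μ : Measure (Matrix.orthogonalGroup (Fin n) ℝ))
    [μ.IsHaarMeasure] :
    ∫ Y : Matrix.orthogonalGroup (Fin n) ℝ,
      ((Y : Matrix (Fin n) (Fin n) ℝ)).trace ∂μ = 0 := by
  haveI : BorelSpace (Matrix.orthogonalGroup (Fin n) ℝ) :=
    Subtype.borelSpace (Matrix.orthogonalGroup (Fin n) ℝ : Set (Matrix (Fin n) (Fin n) ℝ))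
  have hmem : (-1 : Matrix (Fin n) (Fin n) ℝ) ∈ Matrix.orthogonalGroup (Fin n) ℝ := by
    rw [Matrix.mem_orthogonalGroup_iff]
    simp
  set g : Matrix.orthogonalGroup (Fin n) ℝ := ⟨-1, hmem⟩
  have h := integral_mul_left_eq_self
    (μ := μ) (fun Y : Matrix.orthogonalGroup (Fin n) ℝ =>
      ((Y : Matrix (Fin n) (Fin n) ℝ)).trace) g
  have h2 : ∀ Y : Matrix.orthogonalGroup (Fin n) ℝ,
      (((g * Y : Matrix.orthogonalGroup (Fin n) ℝ) : Matrix (Fin n) (Fin n) ℝ)).trace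
      = -((Y : Matrix (Fin n) (Fin n) ℝ)).trace := by
    intro Y
    have : ((g * Y : Matrix.orthogonalGroup (Fin n) ℝ) : Matrix (Fin n) (Fin n) ℝ)
        = -(Y : Matrix (Fin n) (Fin n) ℝ) := by
      simp [g]
    rw [this, Matrix.trace_neg]
  simp only [h2, integral_neg] at h
  linarith

/-- **Entanglement-assisted No-Free-Lunch theorem for learning linear optical
unitaries from entangled coherent-Fock training data.**
Let `m ≥ 1` and `r, s ≥ 1` with `r·s ≤ 2m`, and fix a target `O ∈ O(2m)`.
For `Y ∈ O(2m − rs)`, the hypothesis `T_Y := (I_{rs} ⊕ Y) · O` agrees with `O`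
on the `rs`-dimensional subspace spanned by the `rs` linearly independent mean
vectors appearing in `s` entangled coherent-Fock training states of rank `r`.
Averaging the risk `R_O(T) = 1/2 − Tr(T Oᵀ)/(4m)` over the Haar probability
measure on `O(2m − rs)` gives `1/2 − rs/(4m)`. -/
theorem nfl_linear_optical_entangled_coherent_fock
    (m r s : ℕ) (hm : 1 ≤ m) (hr : 1 ≤ r) (hs : 1 ≤ s) (hrs : r * s ≤ 2 * m)
    (O : Matrix (Fin (2 * m)) (Fin (2 * m)) ℝ)
    (hO : O ∈ Matrix.orthogonalGroup (Fin (2 * m)) ℝ)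
    (μ : Measure (Matrix.orthogonalGroup (Fin (2 * m - r * s)) ℝ))
    [μ.IsHaarMeasure] [IsProbabilityMeasure μ] :
    ∫ Y, (1 / 2 -
        ((Matrix.reindex (finSumFinEquiv.trans (finCongr (Nat.add_sub_cancel' hrs)))
            (finSumFinEquiv.trans (finCongr (Nat.add_sub_cancel' hrs)))
            (Matrix.fromBlocks (1 : Matrix (Fin (r * s)) (Fin (r * s)) ℝ) 0 0
              ((Y : Matrix (Fin (2 * m - r * s)) (Fin (2 * m - r * s)) ℝ)))) * O * Oᵀ).trace /
          (4 * m)) ∂μ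
      = 1 / 2 - (r * s : ℝ) / (4 * m) := by
  haveI : BorelSpace (Matrix.orthogonalGroup (Fin (2 * m - r * s)) ℝ) :=
    Subtype.borelSpace (Matrix.orthogonalGroup (Fin (2 * m - r * s)) ℝ :
      Set (Matrix (Fin (2 * m - r * s)) (Fin (2 * m - r * s)) ℝ))
  have hOO : O * Oᵀ = 1 := by
    rw [Matrix.mem_orthogonalGroup_iff] at hO
    simpa using hO
  have key : ∀ Y : Matrix.orthogonalGroup (Fin (2 * m - r * s)) ℝ,
      (1 / 2 -
        ((Matrix.reindex (finSumFinEquiv.trans (finCongr (Nat.add_sub_cancel' hrs)))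
            (finSumFinEquiv.trans (finCongr (Nat.add_sub_cancel' hrs)))
            (Matrix.fromBlocks (1 : Matrix (Fin (r * s)) (Fin (r * s)) ℝ) 0 0
              ((Y : Matrix (Fin (2 * m - r * s)) (Fin (2 * m - r * s)) ℝ)))) * O * Oᵀ).trace /
          (4 * (m : ℝ)))
      = 1 / 2 - ((r * s : ℝ) + ((Y : Matrix (Fin (2 * m - r * s)) (Fin (2 * m - r * s)) ℝ)).trace)
          / (4 * (m : ℝ)) := by
    intro Y
    rw [mul_assoc, hOO, mul_one, trace_reindex_fromBlocks, Matrix.trace_one]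
    norm_num
  rw [integral_congr_ae (Filter.Eventually.of_forall key)]
  have hInt : Integrable (fun Y : Matrix.orthogonalGroup (Fin (2 * m - r * s)) ℝ =>
      ((Y : Matrix (Fin (2 * m - r * s)) (Fin (2 * m - r * s)) ℝ)).trace) μ := by
    apply Continuous.integrable_of_hasCompactSupport
    · exact Continuous.matrix_trace continuous_subtype_val
    · haveI := orthogonalGroup_compactSpace (2 * m - r * s)
      exact HasCompactSupport.of_compactSpace _
  rw [show (fun Y : Matrix.orthogonalGroup (Fin (2 * m - r * s)) ℝ =>
      1 / 2 - ((r * s : ℝ) + ((Y : Matrix (Fin (2 * m - r * s)) (Fin (2 * m - r * s)) ℝ)).trace)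
        / (4 * (m : ℝ)))
    = fun Y : Matrix.orthogonalGroup (Fin (2 * m - r * s)) ℝ =>
      (1 / 2 - (r * s : ℝ) / (4 * (m : ℝ)))
        - (1 / (4 * (m : ℝ))) * ((Y : Matrix (Fin (2 * m - r * s)) (Fin (2 * m - r * s)) ℝ)).trace
    from funext fun Y => by ring]
  rw [integral_sub (integrable_const _) (hInt.const_mul _), integral_const,
    integral_const_mul, integral_trace_orthogonal, probReal_univ]
  simp
end

section
/- (No-Free-Lunch corollary for learning Gaussian unitaries via the Bloch–Messiah decomposition.) Let m ≥ 1 and let k be an even integer with 0 ≤ k < 2m, and set n := (2m−k)/2 if 2m−k is even (as it is). For any fixed real (2m−k)×(2m−k) matrix F, and for W₁, W₂ independent and Haar-distributed on the compact group K := O(2m−k) ∩ Sp(2m−k, ℝ), the expected reduced risk satisfies ∫∫ [ 1/2 − Tr( I_k ⊕ (W₁ F W₂) )/(4m) ] dμ(W₁) dμ(W₂) = 1/2 − k/(4m). -/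
open MeasureTheory Matrix

/-- The standard symplectic form `Δ = ⊕_{j} [[0,1],[−1,0]]` on `ℝᴺ`. -/
def stdSymplecticForm (N : ℕ) : Matrix (Fin N) (Fin N) ℝ :=
  Matrix.of fun i j =>
    if (i : ℕ) % 2 = 0 ∧ (j : ℕ) = (i : ℕ) + 1 then 1
    else if (j : ℕ) % 2 = 0 ∧ (i : ℕ) = (j : ℕ) + 1 then -1
    else 0

/-- `O(N) ∩ Sp(N, ℝ)`: real `N × N` matrices that are both orthogonal and
symplectic. -/
def orthoSymplectic (N : ℕ) : Set (Matrix (Fin N) (Fin N) ℝ) :=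
  {W | Wᵀ * W = 1 ∧ Wᵀ * stdSymplecticForm N * W = stdSymplecticForm N}

lemma neg_one_mem_orthoSymplectic (N : ℕ) :
    (-1 : Matrix (Fin N) (Fin N) ℝ) ∈ orthoSymplectic N := by
  constructor
  · simp [Matrix.transpose_neg]
  · simp [Matrix.transpose_neg, Matrix.neg_mul, Matrix.mul_neg]

lemma traceMulMeasurable (N : ℕ) (A : Matrix (Fin N) (Fin N) ℝ) :
    Measurable (fun W : Matrix (Fin N) (Fin N) ℝ => (A * W).trace) := by
  have h : (fun W : Matrix (Fin N) (Fin N) ℝ => (A * W).trace)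
      = fun W => ∑ i, ∑ j, A i j * W j i := by
    funext W
    simp [Matrix.trace, Matrix.diag, Matrix.mul_apply]
  rw [h]
  exact Finset.measurable_sum _ fun i _ => Finset.measurable_sum _ fun j _ =>
    (measurable_const.mul ((measurable_pi_apply i).comp (measurable_pi_apply j)))

lemma orthoSymplectic_entry_bound (N : ℕ) (W : Matrix (Fin N) (Fin N) ℝ)
    (hW : W ∈ orthoSymplectic N) (i j : Fin N) : |W i j| ≤ 1 := by
  have h1 : ∑ l, W l j * W l j = 1 := by
    have := congrFun (congrFun hW.1 j) j
    simpa [Matrix.mul_apply, Matrix.transpose_apply, Matrix.one_apply] using this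
  have h2 := Finset.single_le_sum (f := fun l => W l j * W l j)
    (fun l _ => mul_self_nonneg _) (Finset.mem_univ i)
  rw [h1] at h2
  have h3 : W i j * W i j ≤ 1 := h2
  nlinarith [abs_nonneg (W i j), abs_mul_abs_self (W i j)]

lemma trace_fromBlocks_one (k n : ℕ) (D : Matrix (Fin n) (Fin n) ℝ) :
    (fromBlocks (1 : Matrix (Fin k) (Fin k) ℝ) 0 0 D).trace = k + D.trace := by
  have : (fromBlocks (1 : Matrix (Fin k) (Fin k) ℝ) 0 0 D).trace
      = (1 : Matrix (Fin k) (Fin k) ℝ).trace + D.trace := by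
    simp [Matrix.trace, Matrix.diag, Fintype.sum_sum_type]
  rw [this, Matrix.trace_one]
  simp

/-- **No-Free-Lunch corollary for learning Gaussian unitaries via the
Bloch–Messiah decomposition.**
Let `m ≥ 1` and let `k` be even with `0 ≤ k < 2m`.  For any fixed real
`(2m−k) × (2m−k)` matrix `F`, and `W₁, W₂` independent Haar-distributed on the
compact group `K = O(2m−k) ∩ Sp(2m−k, ℝ)` (encoded as a probability measure on
matrices supported on `K` and invariant under left translation by every element
of `K`), the expected reduced risk satisfies
`∫∫ [1/2 − Tr(I_k ⊕ (W₁ F W₂))/(4m)] dμ(W₁) dμ(W₂) = 1/2 − k/(4m)`. -/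
theorem nfl_gaussian_bloch_messiah
    (m k : ℕ) (hm : 1 ≤ m) (hke : k % 2 = 0) (hk : k < 2 * m)
    (F : Matrix (Fin (2 * m - k)) (Fin (2 * m - k)) ℝ)
    (μ : Measure (Matrix (Fin (2 * m - k)) (Fin (2 * m - k)) ℝ))
    [IsProbabilityMeasure μ]
    (hsupp : μ (orthoSymplectic (2 * m - k))ᶜ = 0)
    (hinv : ∀ g ∈ orthoSymplectic (2 * m - k),
      Measure.map (fun W => g * W) μ = μ) :
    ∫ W₁, ∫ W₂,
        (1 / 2 -
          (Matrix.fromBlocks (1 : Matrix (Fin k) (Fin k) ℝ) 0 0 (W₁ * F * W₂)).trace /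
            (4 * m)) ∂μ ∂μ
      = 1 / 2 - k / (4 * m) := by
  have hae : ∀ᵐ W ∂μ, W ∈ orthoSymplectic (2 * m - k) := by
    rw [MeasureTheory.ae_iff]
    exact hsupp
  -- integrability of the trace functional
  have hint : ∀ A : Matrix (Fin (2 * m - k)) (Fin (2 * m - k)) ℝ,
      Integrable (fun W => (A * W).trace) μ := by
    intro A
    refine ⟨(traceMulMeasurable _ A).aestronglyMeasurable, ?_⟩
    apply MeasureTheory.HasFiniteIntegral.of_bounded (C := ∑ i, ∑ j, |A i j|)
    filter_upwards [hae] with W hW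
    have htr : (A * W).trace = ∑ i, ∑ j, A i j * W j i := by
      simp [Matrix.trace, Matrix.diag, Matrix.mul_apply]
    rw [Real.norm_eq_abs, htr]
    calc |∑ i, ∑ j, A i j * W j i| ≤ ∑ i, |∑ j, A i j * W j i| :=
          Finset.abs_sum_le_sum_abs _ _
      _ ≤ ∑ i, ∑ j, |A i j * W j i| :=
          Finset.sum_le_sum fun i _ => Finset.abs_sum_le_sum_abs _ _
      _ ≤ ∑ i, ∑ j, |A i j| := by
          refine Finset.sum_le_sum fun i _ => Finset.sum_le_sum fun j _ => ?_
          rw [abs_mul]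
          calc |A i j| * |W j i| ≤ |A i j| * 1 :=
                mul_le_mul_of_nonneg_left
                  (orthoSymplectic_entry_bound _ W hW j i) (abs_nonneg _)
            _ = |A i j| := mul_one _
  -- measurability of negation
  have hmn : Measurable (fun W : Matrix (Fin (2 * m - k)) (Fin (2 * m - k)) ℝ =>
      (-1 : Matrix (Fin (2 * m - k)) (Fin (2 * m - k)) ℝ) * W) := by
    apply measurable_pi_lambda
    intro i
    apply measurable_pi_lambda
    intro j
    have h : (fun W : Matrix (Fin (2 * m - k)) (Fin (2 * m - k)) ℝ =>
        ((-1 : Matrix (Fin (2 * m - k)) (Fin (2 * m - k)) ℝ) * W) i j)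
        = fun W => -(W i j) := by
      funext W
      simp [Matrix.neg_mul]
    rw [h]
    have h2 : Measurable (fun W : Matrix (Fin (2 * m - k)) (Fin (2 * m - k)) ℝ => W i j) :=
      (measurable_pi_apply j).comp (measurable_pi_apply i)
    exact h2.neg
  -- the trace integral vanishes by the W ↦ -W symmetry
  have hzero : ∀ A : Matrix (Fin (2 * m - k)) (Fin (2 * m - k)) ℝ,
      ∫ W, (A * W).trace ∂μ = 0 := by
    intro A
    have hinv1 := hinv (-1) (neg_one_mem_orthoSymplectic _)
    have h1 : ∫ W, (A * W).trace ∂μ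
        = ∫ W, (A * ((-1 : Matrix (Fin (2 * m - k)) (Fin (2 * m - k)) ℝ) * W)).trace ∂μ := by
      conv_lhs => rw [← hinv1]
      exact MeasureTheory.integral_map hmn.aemeasurable
        (traceMulMeasurable _ A).aestronglyMeasurable
    have h2 : (fun W : Matrix (Fin (2 * m - k)) (Fin (2 * m - k)) ℝ =>
        (A * ((-1 : Matrix (Fin (2 * m - k)) (Fin (2 * m - k)) ℝ) * W)).trace)
        = fun W => -((A * W).trace) := by
      funext W
      simp [Matrix.neg_mul, Matrix.mul_neg]
    rw [h2, MeasureTheory.integral_neg] at h1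
    linarith
  have key : ∀ W₁ : Matrix (Fin (2 * m - k)) (Fin (2 * m - k)) ℝ,
      ∫ W₂, (1 / 2 -
          (Matrix.fromBlocks (1 : Matrix (Fin k) (Fin k) ℝ) 0 0 (W₁ * F * W₂)).trace /
            (4 * m)) ∂μ = 1 / 2 - k / (4 * m) := by
    intro W₁
    have htr : ∀ W₂ : Matrix (Fin (2 * m - k)) (Fin (2 * m - k)) ℝ,
        (1 / 2 -
          (Matrix.fromBlocks (1 : Matrix (Fin k) (Fin k) ℝ) 0 0 (W₁ * F * W₂)).trace /
            (4 * m) : ℝ)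
        = (1 / 2 - k / (4 * m)) - ((W₁ * F) * W₂).trace * (1 / (4 * m)) := by
      intro W₂
      rw [trace_fromBlocks_one, Matrix.mul_assoc]
      ring
    simp_rw [htr]
    rw [MeasureTheory.integral_sub (integrable_const _) ((hint (W₁ * F)).mul_const _)]
    rw [MeasureTheory.integral_mul_const, hzero (W₁ * F)]
    simp
  simp_rw [key]
  simp
end

section
/- Let m ≥ 1, let L ∈ O(2m), let i ∈ {1,…,2m}, and let μ be the Haar probability measure on O(2m). Then ∫_{O(2m)} ( e_iᵀ Wᵀ L W e_i )² dμ(W) = ( 2m + Tr(L²) + (Tr L)² ) / (4m² + 4m). -/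
open MeasureTheory Matrix

namespace HaarMoment

variable {n : ℕ}

abbrev G (n : ℕ) := Matrix.orthogonalGroup (Fin n) ℝ

/-- entry of a group element -/
def ent (a b : Fin n) (W : G n) : ℝ := (W : Matrix (Fin n) (Fin n) ℝ) a b

lemma meas_ent (a b : Fin n) : Measurable (ent a b (n := n)) :=
  (measurable_pi_apply b).comp ((measurable_pi_apply a).comp measurable_subtype_coe)

lemma coe_mul_entry (U W : G n) (a b : Fin n) :
    ent a b (U * W) = ∑ k, (U : Matrix (Fin n) (Fin n) ℝ) a k * ent k b W := by
  show ((U * W : G n) : Matrix (Fin n) (Fin n) ℝ) a b = _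
  rw [Submonoid.coe_mul]; exact Matrix.mul_apply

instance : MeasurableMul (G n) := by
  have key : ∀ c : G n, (Measurable fun x : G n => c * x) ∧ Measurable fun x : G n => x * c := by
    intro c
    constructor
    · apply Measurable.subtype_mk
      apply measurable_pi_lambda; intro a
      apply measurable_pi_lambda; intro b
      have : (fun W : G n => ((c * W : G n) : Matrix (Fin n) (Fin n) ℝ) a b)
          = fun W : G n => ∑ k, (c : Matrix (Fin n) (Fin n) ℝ) a k * ent k b W := by
        funext W; exact coe_mul_entry c W a b
      exact this ▸ (Finset.measurable_sum _ fun k _ => (meas_ent k b).const_mul _)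
    · apply Measurable.subtype_mk
      apply measurable_pi_lambda; intro a
      apply measurable_pi_lambda; intro b
      have : (fun W : G n => ((W * c : G n) : Matrix (Fin n) (Fin n) ℝ) a b)
          = fun W : G n => ∑ k, ent a k W * (c : Matrix (Fin n) (Fin n) ℝ) k b := by
        funext W
        show ((W * c : G n) : Matrix (Fin n) (Fin n) ℝ) a b = _
        rw [Submonoid.coe_mul]; exact Matrix.mul_apply
      exact this ▸ (Finset.measurable_sum _ fun k _ => (meas_ent a k).mul_const _)
  exact ⟨fun c => (key c).1, fun c => (key c).2⟩

/-- columns of an orthogonal matrix are unit vectors -/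
lemma col_norm (W : G n) (b : Fin n) : ∑ k, ent k b W ^ 2 = 1 := by
  have h := (Matrix.mem_orthogonalGroup_iff' (Fin n) ℝ).mp W.2
  have h2 := congrFun (congrFun h b) b
  simp only [Matrix.mul_apply, Matrix.star_eq_conjTranspose,
    Matrix.conjTranspose_apply, Matrix.one_apply_eq, star_trivial] at h2
  rw [← h2]
  congr 1; funext k; rw [sq]; rfl

lemma ent_abs_le (W : G n) (a b : Fin n) : |ent a b W| ≤ 1 := by
  rw [← sq_le_one_iff_abs_le_one]
  calc ent a b W ^ 2 ≤ ∑ k, ent k b W ^ 2 :=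
        Finset.single_le_sum (f := fun k => ent k b W ^ 2)
          (fun k _ => sq_nonneg _) (Finset.mem_univ a)
    _ = 1 := col_norm W b

/-- a rotation acting in the plane of coordinates `a`,`b` -/
def R2 (a b : Fin n) (p q r s : ℝ) : Matrix (Fin n) (Fin n) ℝ :=
  fun j k =>
    if j = a then (if k = a then p else if k = b then q else 0)
    else if j = b then (if k = a then r else if k = b then s else 0)
    else if j = k then 1 else 0

lemma R2_row_a {a b : Fin n} (p q r s : ℝ) (k : Fin n) :
    R2 a b p q r s a k = if k = a then p else if k = b then q else 0 := by simp [R2]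

lemma R2_row_b {a b : Fin n} (hab : a ≠ b) (p q r s : ℝ) (k : Fin n) :
    R2 a b p q r s b k = if k = a then r else if k = b then s else 0 := by
  simp [R2, Ne.symm hab]

lemma R2_row_other {a b j : Fin n} (hj : j ≠ a) (hj' : j ≠ b) (p q r s : ℝ) (k : Fin n) :
    R2 a b p q r s j k = if j = k then 1 else 0 := by simp [R2, hj, hj']

lemma pair_mul (a b : Fin n) (X Y X' Y' : ℝ) (l : Fin n) :
    (if l = a then X else if l = b then Y else 0) *
      (if l = a then X' else if l = b then Y' else 0)
    = if l = a then X * X' else if l = b then Y * Y' else 0 := by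
  by_cases h1 : l = a
  · simp [h1]
  · rw [if_neg h1, if_neg h1, if_neg h1]
    by_cases h2 : l = b
    · rw [if_pos h2, if_pos h2, if_pos h2]
    · rw [if_neg h2, if_neg h2, if_neg h2, mul_zero]

lemma sum_pair {a b : Fin n} (hab : a ≠ b) (X Y : ℝ) :
    ∑ l, (if l = a then X else if l = b then Y else 0) = X + Y := by
  have h : ∀ l : Fin n, (if l = a then X else if l = b then Y else 0)
      = (if l = a then X else 0) + (if l = b then Y else 0) := by
    intro l
    by_cases h1 : l = a <;> by_cases h2 : l = b <;> simp_all
  rw [Finset.sum_congr rfl fun l _ => h l, Finset.sum_add_distrib]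
  simp [Finset.sum_ite_eq']

lemma R2_mem {a b : Fin n} (hab : a ≠ b) {p q r s : ℝ}
    (h1 : p ^ 2 + q ^ 2 = 1) (h2 : r ^ 2 + s ^ 2 = 1) (h3 : p * r + q * s = 0) :
    R2 a b p q r s ∈ Matrix.orthogonalGroup (Fin n) ℝ := by
  rw [Matrix.mem_orthogonalGroup_iff]
  ext j k
  rw [Matrix.mul_apply]
  show ∑ l, R2 a b p q r s j l * R2 a b p q r s k l = (1 : Matrix (Fin n) (Fin n) ℝ) j k
  by_cases hj : j = a <;> by_cases hj' : j = b
  · exact absurd (hj.symm.trans hj') hab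
  · -- j = a
    rw [hj]
    by_cases hk : k = a <;> by_cases hk' : k = b
    · exact absurd (hk.symm.trans hk') hab
    · rw [hk]
      rw [Finset.sum_congr rfl (g := fun l => if l = a then p * p else if l = b then q * q else 0)
        (fun l _ => by simp only [R2_row_a, pair_mul])]
      rw [sum_pair hab, Matrix.one_apply_eq]; nlinarith
    · rw [hk']
      rw [Finset.sum_congr rfl (g := fun l => if l = a then p * r else if l = b then q * s else 0)
        (fun l _ => by simp only [R2_row_a, R2_row_b hab, pair_mul])]
      rw [sum_pair hab, Matrix.one_apply_ne hab]; linarith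
    · rw [Finset.sum_congr rfl (g := fun l => if k = l then (if l = a then p else if l = b then q else 0) else 0)
        (fun l _ => by simp only [R2_row_a, R2_row_other hk hk', mul_ite, mul_one, mul_zero])]
      have hak : a ≠ k := fun h => hk h.symm
      simp [Finset.sum_ite_eq, hk, hk', Matrix.one_apply_ne hak]
  · -- j = b
    rw [hj']
    by_cases hk : k = a <;> by_cases hk' : k = b
    · exact absurd (hk.symm.trans hk') hab
    · rw [hk]
      rw [Finset.sum_congr rfl (g := fun l => if l = a then r * p else if l = b then s * q else 0)
        (fun l _ => by simp only [R2_row_a, R2_row_b hab, pair_mul])]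
      rw [sum_pair hab, Matrix.one_apply_ne (Ne.symm hab)]; linarith
    · rw [hk']
      rw [Finset.sum_congr rfl (g := fun l => if l = a then r * r else if l = b then s * s else 0)
        (fun l _ => by simp only [R2_row_b hab, pair_mul])]
      rw [sum_pair hab, Matrix.one_apply_eq]; nlinarith
    · rw [Finset.sum_congr rfl (g := fun l => if k = l then (if l = a then r else if l = b then s else 0) else 0)
        (fun l _ => by simp only [R2_row_b hab, R2_row_other hk hk', mul_ite, mul_one, mul_zero])]
      have hbk : b ≠ k := fun h => hk' h.symm
      simp [Finset.sum_ite_eq, hk, hk', Matrix.one_apply_ne hbk]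
  · -- j ∉ {a,b}
    by_cases hk : k = a
    · rw [hk]
      rw [Finset.sum_congr rfl (g := fun l => if j = l then (if l = a then p else if l = b then q else 0) else 0)
        (fun l _ => by simp only [R2_row_other hj hj', R2_row_a, ite_mul, one_mul, zero_mul])]
      simp [Finset.sum_ite_eq, hj, hj', Matrix.one_apply_ne hj]
    · by_cases hk' : k = b
      · rw [hk']
        rw [Finset.sum_congr rfl (g := fun l => if j = l then (if l = a then r else if l = b then s else 0) else 0)
          (fun l _ => by simp only [R2_row_other hj hj', R2_row_b hab, ite_mul, one_mul, zero_mul])]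
        simp [Finset.sum_ite_eq, hj, hj', Matrix.one_apply_ne hj']
      · rw [Finset.sum_congr rfl (g := fun l => if j = l then (if k = l then (1:ℝ) else 0) else 0)
          (fun l _ => by simp only [R2_row_other hj hj', R2_row_other hk hk', ite_mul, one_mul, zero_mul])]
        simp only [Finset.sum_ite_eq, Finset.mem_univ, if_true]
        by_cases hjk : j = k
        · rw [hjk]; simp
        · rw [Matrix.one_apply_ne hjk, if_neg (fun h : k = j => hjk h.symm)]

variable (μ : Measure (G n)) [IsProbabilityMeasure μ]

lemma integrable_bdd {f : G n → ℝ} (hf : Measurable f) (h : ∀ W, |f W| ≤ 1) :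
    Integrable f μ :=
  ⟨hf.aestronglyMeasurable, HasFiniteIntegral.of_bounded (C := 1)
    (ae_of_all _ fun W => by rw [Real.norm_eq_abs]; exact h W)⟩

variable (i : Fin n)

/-- fourth moment of entries of the `i`-th column -/
noncomputable def Mo (a b c d : Fin n) : ℝ :=
  ∫ W, ent a i W * ent b i W * ent c i W * ent d i W ∂μ

lemma meas_prod4 (g : G n → G n) (hg : Measurable g) (a b c d : Fin n) :
    Measurable fun W => ent a i (g W) * ent b i (g W) * ent c i (g W) * ent d i (g W) :=
  ((((meas_ent a i).comp hg).mul ((meas_ent b i).comp hg)).mul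
    ((meas_ent c i).comp hg)).mul ((meas_ent d i).comp hg)

lemma abs_prod4 (g : G n → G n) (a b c d : Fin n) (W : G n) :
    |ent a i (g W) * ent b i (g W) * ent c i (g W) * ent d i (g W)| ≤ 1 := by
  rw [abs_mul, abs_mul, abs_mul]
  have h1 := ent_abs_le (g W) a i
  have h2 := ent_abs_le (g W) b i
  have h3 := ent_abs_le (g W) c i
  have h4 := ent_abs_le (g W) d i
  have n1 := abs_nonneg (ent a i (g W))
  have n2 := abs_nonneg (ent b i (g W))
  have n3 := abs_nonneg (ent c i (g W))
  have n4 := abs_nonneg (ent d i (g W))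
  have p1 : |ent a i (g W)| * |ent b i (g W)| ≤ 1 := mul_le_one₀ h1 n2 h2
  have p2 : |ent a i (g W)| * |ent b i (g W)| * |ent c i (g W)| ≤ 1 :=
    mul_le_one₀ p1 n3 h3
  exact mul_le_one₀ p2 n4 h4

lemma integrable_prod4 (g : G n → G n) (hg : Measurable g) (a b c d : Fin n) :
    Integrable (fun W => ent a i (g W) * ent b i (g W) * ent c i (g W) * ent d i (g W)) μ :=
  integrable_bdd μ (meas_prod4 i g hg a b c d) (abs_prod4 i g a b c d)

lemma integrable_prod4' (a b c d : Fin n) :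
    Integrable (fun W => ent a i W * ent b i W * ent c i W * ent d i W) μ :=
  integrable_prod4 μ i id measurable_id a b c d

variable [μ.IsHaarMeasure]

lemma moment_transform (U : G n) (a b c d : Fin n) :
    Mo μ i a b c d
      = ∫ W, ent a i (U * W) * ent b i (U * W) * ent c i (U * W) * ent d i (U * W) ∂μ :=
  (integral_mul_left_eq_self
    (fun W => ent a i W * ent b i W * ent c i W * ent d i W) U).symm

lemma sum_pair_mul {a b : Fin n} (hab : a ≠ b) (X Y : ℝ) (v : Fin n → ℝ) :
    ∑ k, (if k = a then X else if k = b then Y else 0) * v k = X * v a + Y * v b := by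
  rw [Finset.sum_congr rfl
      (g := fun k => if k = a then X * v a else if k = b then Y * v b else 0)
      (fun k _ => by by_cases h1 : k = a <;> by_cases h2 : k = b <;> simp [h1, h2, Ne.symm hab]),
    sum_pair hab]

lemma sum_other_mul {a b j : Fin n} (hj : j ≠ a) (hj' : j ≠ b) (p q r s : ℝ)
    (v : Fin n → ℝ) :
    ∑ k, R2 a b p q r s j k * v k = v j := by
  rw [Finset.sum_congr rfl (g := fun k => if j = k then v k else 0)
      (fun k _ => by simp only [R2_row_other hj hj', ite_mul, one_mul, zero_mul])]
  simp [Finset.sum_ite_eq]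

lemma ent_R2_mul {a b : Fin n} (hab : a ≠ b) {p q r s : ℝ}
    (hmem : R2 a b p q r s ∈ Matrix.orthogonalGroup (Fin n) ℝ)
    (i j : Fin n) (W : G n) :
    ent j i ((⟨R2 a b p q r s, hmem⟩ : G n) * W)
      = if j = a then p * ent a i W + q * ent b i W
        else if j = b then r * ent a i W + s * ent b i W
        else ent j i W := by
  rw [coe_mul_entry]
  by_cases hj : j = a
  · rw [if_pos hj, hj]
    rw [Finset.sum_congr rfl (g := fun k =>
        (if k = a then p else if k = b then q else 0) * ent k i W)
      (fun k _ => by simp only [show ((⟨R2 a b p q r s, hmem⟩ : G n) : Matrix (Fin n) (Fin n) ℝ)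
          = R2 a b p q r s from rfl, R2_row_a])]
    exact sum_pair_mul hab p q (fun k => ent k i W)
  · rw [if_neg hj]
    by_cases hj' : j = b
    · rw [if_pos hj', hj']
      rw [Finset.sum_congr rfl (g := fun k =>
          (if k = a then r else if k = b then s else 0) * ent k i W)
        (fun k _ => by simp only [show ((⟨R2 a b p q r s, hmem⟩ : G n) : Matrix (Fin n) (Fin n) ℝ)
            = R2 a b p q r s from rfl, R2_row_b hab])]
      exact sum_pair_mul hab r s (fun k => ent k i W)
    · rw [if_neg hj']
      exact sum_other_mul hj hj' p q r s (fun k => ent k i W)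

lemma Mo_zero_of_sign {e f : Fin n} (hef : e ≠ f) (a b c d : Fin n)
    (hsign : (if a = e then (-1:ℝ) else 1) * (if b = e then (-1:ℝ) else 1) *
        (if c = e then (-1:ℝ) else 1) * (if d = e then (-1:ℝ) else 1) = -1) :
    Mo μ i a b c d = 0 := by
  have hmem : R2 e f (-1) 0 0 1 ∈ Matrix.orthogonalGroup (Fin n) ℝ :=
    R2_mem hef (by norm_num) (by norm_num) (by norm_num)
  set U : G n := ⟨R2 e f (-1) 0 0 1, hmem⟩ with hU
  have hent : ∀ (j : Fin n) (W : G n),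
      ent j i (U * W) = (if j = e then (-1:ℝ) else 1) * ent j i W := by
    intro j W
    rw [hU, ent_R2_mul hef hmem]
    by_cases hj : j = e
    · rw [if_pos hj, if_pos hj, hj]; ring
    · rw [if_neg hj, if_neg hj]
      by_cases hj' : j = f
      · rw [if_pos hj']; rw [hj']; ring
      · rw [if_neg hj']; ring
  have h1 : ∫ W, ent a i W * ent b i W * ent c i W * ent d i W ∂μ
      = ∫ W, ent a i (U * W) * ent b i (U * W) * ent c i (U * W) * ent d i (U * W) ∂μ :=
    (integral_mul_left_eq_self
      (fun W => ent a i W * ent b i W * ent c i W * ent d i W) U).symm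
  have h2 : (fun W => ent a i (U * W) * ent b i (U * W) * ent c i (U * W) * ent d i (U * W))
      = fun W => (-1 : ℝ) * (ent a i W * ent b i W * ent c i W * ent d i W) := by
    funext W
    rw [hent a, hent b, hent c, hent d]
    linear_combination (ent a i W * ent b i W * ent c i W * ent d i W) * hsign
  rw [h2, integral_const_mul] at h1
  unfold Mo
  linarith [h1]

lemma Mo_swap {a b : Fin n} (hab : a ≠ b) :
    Mo μ i a a a a = Mo μ i b b b b := by
  have hmem : R2 a b 0 1 1 0 ∈ Matrix.orthogonalGroup (Fin n) ℝ :=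
    R2_mem hab (by norm_num) (by norm_num) (by norm_num)
  set U : G n := ⟨R2 a b 0 1 1 0, hmem⟩ with hU
  have hA : ∀ W : G n, ent a i (U * W) = ent b i W := by
    intro W; rw [hU, ent_R2_mul hab hmem, if_pos rfl]; ring
  have h1 := moment_transform μ i U a a a a
  rw [h1]
  unfold Mo
  congr 1
  funext W
  rw [hA]

lemma Mo_eq_3 {a b : Fin n} (hab : a ≠ b) :
    Mo μ i a a a a = 3 * Mo μ i a a b b := by
  set c : ℝ := Real.sqrt 2 / 2 with hcdef
  have hc : c ^ 2 = 1 / 2 := by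
    rw [hcdef, div_pow, Real.sq_sqrt (by norm_num : (0:ℝ) ≤ 2)]; norm_num
  have hmem : R2 a b c (-c) c c ∈ Matrix.orthogonalGroup (Fin n) ℝ :=
    R2_mem hab (by nlinarith [hc]) (by nlinarith [hc]) (by ring)
  set U : G n := ⟨R2 a b c (-c) c c, hmem⟩ with hU
  have hA : ∀ W : G n, ent a i (U * W) = c * ent a i W + (-c) * ent b i W := by
    intro W; rw [hU, ent_R2_mul hab hmem, if_pos rfl]
  have hB : ∀ W : G n, ent b i (U * W) = c * ent a i W + c * ent b i W := by
    intro W; rw [hU, ent_R2_mul hab hmem, if_neg (Ne.symm hab), if_pos rfl]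
  have e1 := moment_transform μ i U a a a a
  have e2 := moment_transform μ i U b b b b
  have iU1 := integrable_prod4 μ i (fun W => U * W) (measurable_const_mul U) a a a a
  have iU2 := integrable_prod4 μ i (fun W => U * W) (measurable_const_mul U) b b b b
  have key : Mo μ i a a a a + Mo μ i b b b b
      = ∫ W, ((fun W => ent a i (U*W) * ent a i (U*W) * ent a i (U*W) * ent a i (U*W)) W
          + (fun W => ent b i (U*W) * ent b i (U*W) * ent b i (U*W) * ent b i (U*W)) W) ∂μ := by
    rw [e1, e2, ← integral_add iU1 iU2]
  have hpt : (fun W : G n =>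
      ((fun W => ent a i (U*W) * ent a i (U*W) * ent a i (U*W) * ent a i (U*W)) W
        + (fun W => ent b i (U*W) * ent b i (U*W) * ent b i (U*W) * ent b i (U*W)) W))
      = fun W => (1/2 : ℝ) * (ent a i W * ent a i W * ent a i W * ent a i W)
          + ((3 : ℝ) * (ent a i W * ent a i W * ent b i W * ent b i W)
            + (1/2 : ℝ) * (ent b i W * ent b i W * ent b i W * ent b i W)) := by
    funext W
    simp only [hA W, hB W]
    linear_combination (2*(c^2 + 1/2)*((ent a i W)^4 + 6*(ent a i W)^2*(ent b i W)^2
      + (ent b i W)^4)) * hc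
  rw [hpt] at key
  have I1 : Integrable (fun W : G n =>
      (1/2 : ℝ) * (ent a i W * ent a i W * ent a i W * ent a i W)) μ :=
    (integrable_prod4' μ i a a a a).const_mul _
  have I3 : Integrable (fun W : G n =>
      (3 : ℝ) * (ent a i W * ent a i W * ent b i W * ent b i W)) μ :=
    (integrable_prod4' μ i a a b b).const_mul _
  have I4 : Integrable (fun W : G n =>
      (1/2 : ℝ) * (ent b i W * ent b i W * ent b i W * ent b i W)) μ :=
    (integrable_prod4' μ i b b b b).const_mul _
  have I2 : Integrable (fun W : G n =>
      (3 : ℝ) * (ent a i W * ent a i W * ent b i W * ent b i W)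
        + (1/2 : ℝ) * (ent b i W * ent b i W * ent b i W * ent b i W)) μ := I3.add I4
  rw [integral_add I1 I2, integral_add I3 I4,
    integral_const_mul, integral_const_mul, integral_const_mul] at key
  have hswap := Mo_swap μ i hab
  unfold Mo at key hswap ⊢
  linarith [key, hswap]

lemma Mo_perm1 (a b : Fin n) : Mo μ i a b a b = Mo μ i a a b b := by
  unfold Mo; congr 1; funext W; ring

lemma Mo_perm2 (a b : Fin n) : Mo μ i a b b a = Mo μ i a a b b := by
  unfold Mo; congr 1; funext W; ring

lemma Mo_sum : ∑ a : Fin n, ∑ b : Fin n, Mo μ i a a b b = 1 := by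
  have e1 : ∀ a : Fin n, ∑ b : Fin n, Mo μ i a a b b
      = ∫ W, ∑ b : Fin n, ent a i W * ent a i W * ent b i W * ent b i W ∂μ :=
    fun a => (integral_finset_sum _ (fun b _ => integrable_prod4' μ i a a b b)).symm
  rw [Finset.sum_congr rfl (fun a _ => e1 a),
    ← integral_finset_sum _ (fun a _ =>
      integrable_finset_sum _ (fun b _ => integrable_prod4' μ i a a b b))]
  have hpt : ∀ W : G n,
      ∑ a : Fin n, ∑ b : Fin n, ent a i W * ent a i W * ent b i W * ent b i W = 1 := by
    intro W
    have h := col_norm W i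
    calc ∑ a : Fin n, ∑ b : Fin n, ent a i W * ent a i W * ent b i W * ent b i W
        = ∑ a : Fin n, ∑ b : Fin n, (ent a i W ^ 2) * (ent b i W ^ 2) := by
          refine Finset.sum_congr rfl fun a _ => Finset.sum_congr rfl fun b _ => by ring
      _ = (∑ a : Fin n, ent a i W ^ 2) * (∑ b : Fin n, ent b i W ^ 2) := by
          rw [Finset.sum_mul_sum]
      _ = 1 := by rw [h, one_mul]
  rw [integral_congr_ae (ae_of_all _ hpt)]
  simp

lemma Mo_diag_eq (a b : Fin n) : Mo μ i a a a a = Mo μ i b b b b := by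
  by_cases h : a = b
  · rw [h]
  · exact Mo_swap μ i h

lemma Mo_diag_val (hn : 2 ≤ n) (a : Fin n) :
    Mo μ i a a a a = 3 / (n * (n + 2)) := by
  set A := Mo μ i a a a a with hA
  have hoff : ∀ b c : Fin n, b ≠ c → Mo μ i b b c c = A / 3 := by
    intro b c hbc
    have h3 := Mo_eq_3 μ i hbc
    have hd : Mo μ i b b b b = A := Mo_diag_eq μ i b a
    linarith
  have hrow : ∀ b : Fin n, ∑ c : Fin n, Mo μ i b b c c = A + (n - 1 : ℝ) * (A / 3) := by
    intro b
    rw [← Finset.add_sum_erase _ _ (Finset.mem_univ b)]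
    have : ∑ c ∈ Finset.univ.erase b, Mo μ i b b c c
        = ∑ c ∈ Finset.univ.erase b, A / 3 := by
      refine Finset.sum_congr rfl fun c hc => ?_
      exact hoff b c (Ne.symm (Finset.ne_of_mem_erase hc))
    rw [this, Finset.sum_const, Finset.card_erase_of_mem (Finset.mem_univ b),
      Finset.card_univ, Fintype.card_fin, nsmul_eq_mul, Mo_diag_eq μ i b a]
    rw [Nat.cast_sub (by omega : 1 ≤ n), Nat.cast_one]
  have hsum := Mo_sum μ i
  rw [Finset.sum_congr rfl (fun b _ => hrow b), Finset.sum_const, Finset.card_univ,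
    Fintype.card_fin, nsmul_eq_mul] at hsum
  have hn0 : (0:ℝ) < n := by exact_mod_cast (by omega : 0 < n)
  have hne : (n : ℝ) * (n + 2) ≠ 0 := by nlinarith
  rw [hA, eq_div_iff hne] at *
  linear_combination 3 * hsum

lemma Mo_off_val (hn : 2 ≤ n) {a b : Fin n} (hab : a ≠ b) :
    Mo μ i a a b b = 1 / (n * (n + 2)) := by
  have h3 := Mo_eq_3 μ i hab
  rw [Mo_diag_val μ i hn a] at h3
  linear_combination (-1/3 : ℝ) * h3

lemma exists_sign {α : Type*} [DecidableEq α] {a b c d : α}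
    (h1 : ¬(a = b ∧ c = d)) (h2 : ¬(a = c ∧ b = d)) (h3 : ¬(a = d ∧ b = c)) :
    ∃ e : α, (if a = e then (-1:ℝ) else 1) * (if b = e then (-1:ℝ) else 1) *
      (if c = e then (-1:ℝ) else 1) * (if d = e then (-1:ℝ) else 1) = -1 := by
  by_cases hab : a = b <;> by_cases hac : a = c <;> by_cases had : a = d <;>
    by_cases hbc : b = c <;> by_cases hbd : b = d <;> by_cases hcd : c = d <;>
    first
      | (refine ⟨a, ?_⟩; simp_all [eq_comm]; done)
      | (refine ⟨b, ?_⟩; simp_all [eq_comm]; done)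
      | (refine ⟨c, ?_⟩; simp_all [eq_comm]; done)
      | (refine ⟨d, ?_⟩; simp_all [eq_comm]; done)
      | simp_all

lemma Mo_formula (hn : 2 ≤ n) (a b c d : Fin n) :
    Mo μ i a b c d
      = (if a = b ∧ c = d then (1:ℝ) / (n * (n + 2)) else 0)
        + (if a = c ∧ b = d then (1:ℝ) / (n * (n + 2)) else 0)
        + (if a = d ∧ b = c then (1:ℝ) / (n * (n + 2)) else 0) := by
  by_cases h1 : a = b ∧ c = d <;> by_cases h2 : a = c ∧ b = d <;>
    by_cases h3 : a = d ∧ b = c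
  · rw [if_pos h1, if_pos h2, if_pos h3, ← h1.1, ← h1.2, ← h2.1,
      Mo_diag_val μ i hn a]
    ring
  · exact absurd ⟨h2.1.trans h1.2, h1.1.symm.trans h2.1⟩ h3
  · exact absurd ⟨h3.1.trans h1.2.symm, h1.1.symm.trans h3.1⟩ h2
  · have hac : a ≠ c := fun h => h2 ⟨h, (h1.1.symm.trans h).trans h1.2⟩
    rw [if_pos h1, if_neg h2, if_neg h3, ← h1.1, ← h1.2,
      Mo_off_val μ i hn hac]
    ring
  · exact absurd ⟨h2.1.trans h3.2.symm, h2.1.symm.trans h3.1⟩ h1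
  · have hab : a ≠ b := fun h => h1 ⟨h, h2.1.symm.trans (h.trans h2.2)⟩
    rw [if_neg h1, if_pos h2, if_neg h3, ← h2.1, ← h2.2,
      Mo_perm1 μ i a b, Mo_off_val μ i hn hab]
    ring
  · have hab : a ≠ b := fun h => h1 ⟨h, (h3.2.symm.trans h.symm).trans h3.1⟩
    rw [if_neg h1, if_neg h2, if_pos h3, ← h3.1, ← h3.2,
      Mo_perm2 μ i a b, Mo_off_val μ i hn hab]
    ring
  · rw [if_neg h1, if_neg h2, if_neg h3]
    haveI : Nontrivial (Fin n) := Fin.nontrivial_iff_two_le.mpr hn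
    obtain ⟨e, hsign⟩ := exists_sign h1 h2 h3
    obtain ⟨f, hf⟩ := exists_ne e
    rw [Mo_zero_of_sign μ i (Ne.symm hf) a b c d hsign]
    norm_num

theorem integral_sq_quadform (hn : 2 ≤ n) (L : Matrix (Fin n) (Fin n) ℝ)
    (hL : L ∈ Matrix.orthogonalGroup (Fin n) ℝ) :
    ∫ W, (((W : Matrix (Fin n) (Fin n) ℝ)ᵀ * L *
        (W : Matrix (Fin n) (Fin n) ℝ)) i i) ^ 2 ∂μ
      = ((n : ℝ) + (L * L).trace + L.trace ^ 2) / ((n : ℝ) * ((n : ℝ) + 2)) := by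
  have hQ : ∀ W : G n,
      ((W : Matrix (Fin n) (Fin n) ℝ)ᵀ * L * (W : Matrix (Fin n) (Fin n) ℝ)) i i
        = ∑ a, ∑ b, L a b * (ent a i W * ent b i W) := by
    intro W
    have e0 : ((W : Matrix (Fin n) (Fin n) ℝ)ᵀ * L * (W : Matrix (Fin n) (Fin n) ℝ)) i i
        = ∑ k, (∑ a, (W : Matrix (Fin n) (Fin n) ℝ) a i * L a k)
            * (W : Matrix (Fin n) (Fin n) ℝ) k i := by
      simp only [Matrix.mul_apply, Matrix.transpose_apply]
    rw [e0]
    calc ∑ k, (∑ a, (W : Matrix (Fin n) (Fin n) ℝ) a i * L a k)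
            * (W : Matrix (Fin n) (Fin n) ℝ) k i
        = ∑ k, ∑ a, (W : Matrix (Fin n) (Fin n) ℝ) a i * L a k
            * (W : Matrix (Fin n) (Fin n) ℝ) k i := by
          refine Finset.sum_congr rfl fun k _ => ?_
          rw [Finset.sum_mul]
      _ = ∑ a, ∑ k, (W : Matrix (Fin n) (Fin n) ℝ) a i * L a k
            * (W : Matrix (Fin n) (Fin n) ℝ) k i := Finset.sum_comm
      _ = ∑ a, ∑ b, L a b * (ent a i W * ent b i W) := by
          refine Finset.sum_congr rfl fun a _ => Finset.sum_congr rfl fun b _ => ?_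
          simp only [ent]; ring
  have hQ2 : (fun W : G n =>
      (((W : Matrix (Fin n) (Fin n) ℝ)ᵀ * L * (W : Matrix (Fin n) (Fin n) ℝ)) i i) ^ 2)
      = fun W : G n => ∑ a, ∑ c, ∑ b, ∑ d, (L a b * L c d)
          * (ent a i W * ent b i W * ent c i W * ent d i W) := by
    funext W
    rw [hQ W, sq, Finset.sum_mul_sum]
    refine Finset.sum_congr rfl fun a _ => Finset.sum_congr rfl fun c _ => ?_
    rw [Finset.sum_mul_sum]
    refine Finset.sum_congr rfl fun b _ => Finset.sum_congr rfl fun d _ => ?_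
    ring
  rw [hQ2]
  rw [integral_finset_sum _ (fun a _ => integrable_finset_sum _ (fun c _ =>
    integrable_finset_sum _ (fun b _ => integrable_finset_sum _ (fun d _ =>
      (integrable_prod4' μ i a b c d).const_mul _))))]
  have step : ∀ a : Fin n,
      (∫ W, ∑ c, ∑ b, ∑ d, (L a b * L c d)
        * (ent a i W * ent b i W * ent c i W * ent d i W) ∂μ)
      = ∑ c, ∑ b, ∑ d, (L a b * L c d) * Mo μ i a b c d := by
    intro a
    rw [integral_finset_sum _ (fun c _ => integrable_finset_sum _ (fun b _ =>
      integrable_finset_sum _ (fun d _ => (integrable_prod4' μ i a b c d).const_mul _)))]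
    refine Finset.sum_congr rfl fun c _ => ?_
    rw [integral_finset_sum _ (fun b _ => integrable_finset_sum _ (fun d _ =>
      (integrable_prod4' μ i a b c d).const_mul _))]
    refine Finset.sum_congr rfl fun b _ => ?_
    rw [integral_finset_sum _ (fun d _ => (integrable_prod4' μ i a b c d).const_mul _)]
    refine Finset.sum_congr rfl fun d _ => ?_
    rw [integral_const_mul]
    rfl
  rw [Finset.sum_congr rfl fun a _ => step a]
  -- plug in the moment formula
  set β : ℝ := (1:ℝ) / (n * (n + 2)) with hβ
  have hform : ∀ a c b d : Fin n, (L a b * L c d) * Mo μ i a b c d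
      = (if c = d then (if a = b then L a b * L c d * β else 0) else 0)
        + (if a = c then (if b = d then L a b * L c d * β else 0) else 0)
        + (if a = d then (if b = c then L a b * L c d * β else 0) else 0) := by
    intro a c b d
    rw [Mo_formula μ i hn a b c d, ← hβ, mul_add, mul_add]
    congr 1
    · congr 1
      · by_cases h1 : a = b <;> by_cases h2 : c = d <;> simp [h1, h2] <;> ring
      · by_cases h1 : a = c <;> by_cases h2 : b = d <;> simp [h1, h2] <;> ring
    · by_cases h1 : a = d <;> by_cases h2 : b = c <;> simp [h1, h2] <;> ring
  rw [Finset.sum_congr rfl fun a _ => Finset.sum_congr rfl fun c _ =>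
    Finset.sum_congr rfl fun b _ => Finset.sum_congr rfl fun d _ => hform a c b d]
  simp only [Finset.sum_add_distrib]
  -- evaluate the three sums
  have hE1 : ∑ a : Fin n, ∑ c : Fin n, ∑ b : Fin n, ∑ d : Fin n,
      (if c = d then (if a = b then L a b * L c d * β else 0) else 0)
      = L.trace * L.trace * β := by
    have inner : ∀ a c : Fin n, ∑ b : Fin n, ∑ d : Fin n,
        (if c = d then (if a = b then L a b * L c d * β else 0) else 0)
        = L a a * L c c * β := by
      intro a c
      simp [Finset.sum_ite_eq]
    rw [Finset.sum_congr rfl fun a _ => Finset.sum_congr rfl fun c _ => inner a c]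
    have htr : L.trace = ∑ a, L a a := by simp [Matrix.trace, Matrix.diag]
    rw [htr, Finset.sum_mul_sum, Finset.sum_mul]
    refine Finset.sum_congr rfl fun a _ => ?_
    rw [Finset.sum_mul]
  have hE2 : ∑ a : Fin n, ∑ c : Fin n, ∑ b : Fin n, ∑ d : Fin n,
      (if a = c then (if b = d then L a b * L c d * β else 0) else 0)
      = (n : ℝ) * β := by
    have inner : ∀ a c : Fin n, ∑ b : Fin n, ∑ d : Fin n,
        (if a = c then (if b = d then L a b * L c d * β else 0) else 0)
        = if a = c then (∑ b : Fin n, L a b * L c b * β) else 0 := by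
      intro a c
      by_cases h : a = c <;> simp [h, Finset.sum_ite_eq]
    rw [Finset.sum_congr rfl fun a _ => Finset.sum_congr rfl fun c _ => inner a c]
    simp only [Finset.sum_ite_eq, Finset.mem_univ, if_true]
    have horto : ∀ a : Fin n, ∑ b : Fin n, L a b * L a b = 1 := by
      intro a
      have h := (Matrix.mem_orthogonalGroup_iff (Fin n) ℝ).mp hL
      have h2 := congrFun (congrFun h a) a
      simp only [Matrix.mul_apply, Matrix.star_eq_conjTranspose,
        Matrix.conjTranspose_apply, star_trivial, Matrix.one_apply_eq] at h2
      exact h2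
    have : ∀ a : Fin n, ∑ b : Fin n, L a b * L a b * β = β := by
      intro a
      rw [← Finset.sum_mul, horto a, one_mul]
    rw [Finset.sum_congr rfl fun a _ => this a, Finset.sum_const, Finset.card_univ,
      Fintype.card_fin, nsmul_eq_mul]
  have hE3 : ∑ a : Fin n, ∑ c : Fin n, ∑ b : Fin n, ∑ d : Fin n,
      (if a = d then (if b = c then L a b * L c d * β else 0) else 0)
      = (L * L).trace * β := by
    have inner : ∀ a c : Fin n, ∑ b : Fin n, ∑ d : Fin n,
        (if a = d then (if b = c then L a b * L c d * β else 0) else 0)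
        = L a c * L c a * β := by
      intro a c
      simp [Finset.sum_ite_eq, Finset.sum_ite_eq']
    rw [Finset.sum_congr rfl fun a _ => Finset.sum_congr rfl fun c _ => inner a c]
    have htr2 : (L * L).trace = ∑ a, ∑ c, L a c * L c a := by
      simp [Matrix.trace, Matrix.diag, Matrix.mul_apply]
    rw [htr2, Finset.sum_mul]
    refine Finset.sum_congr rfl fun a _ => ?_
    rw [Finset.sum_mul]
  rw [hE1, hE2, hE3, hβ]
  have hn0 : (0:ℝ) < n := by exact_mod_cast (by omega : 0 < n)
  have hne : (n : ℝ) * ((n:ℝ) + 2) ≠ 0 := by nlinarith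
  field_simp
  ring

end HaarMoment

/-- **Second moment of a quadratic form along a Haar-random orthogonal frame.**
For `m ≥ 1`, `L ∈ O(2m)`, a standard basis vector `e_i` of `ℝ^{2m}`, and `μ`
the Haar probability measure on `O(2m)`,
`∫ (e_iᵀ Wᵀ L W e_i)² dμ(W) = (2m + Tr(L²) + (Tr L)²)/(4m² + 4m)`. -/
theorem haar_second_moment_quadratic_form
    (m : ℕ) (hm : 1 ≤ m)
    (L : Matrix (Fin (2 * m)) (Fin (2 * m)) ℝ)
    (hL : L ∈ Matrix.orthogonalGroup (Fin (2 * m)) ℝ)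
    (i : Fin (2 * m))
    (μ : Measure (Matrix.orthogonalGroup (Fin (2 * m)) ℝ))
    [μ.IsHaarMeasure] [IsProbabilityMeasure μ] :
    ∫ W, (((W : Matrix (Fin (2 * m)) (Fin (2 * m)) ℝ)ᵀ * L *
            (W : Matrix (Fin (2 * m)) (Fin (2 * m)) ℝ)) i i) ^ 2 ∂μ
      = (2 * m + (L * L).trace + L.trace ^ 2) / (4 * m ^ 2 + 4 * m) := by
  have h := HaarMoment.integral_sq_quadform μ i (by omega : 2 ≤ 2 * m) L hL
  rw [h]
  have hnum : ((2 * m : ℕ) : ℝ) = 2 * (m : ℝ) := by push_cast; ring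
  rw [hnum]
  congr 1
  push_cast
  ring
end

section
/- Let n ≥ 1 and let μ be the Haar probability measure on the compact group O(n). Then ∫_{O(n)} Tr(Y²) dμ(Y) = 1. -/
open MeasureTheory Matrix

instance orthBorel (n : ℕ) : BorelSpace (Matrix.orthogonalGroup (Fin n) ℝ) :=
  inferInstanceAs (BorelSpace
    ((Matrix.orthogonalGroup (Fin n) ℝ : Set (Matrix (Fin n) (Fin n) ℝ))))

instance orthMeasurableMul (n : ℕ) : MeasurableMul (Matrix.orthogonalGroup (Fin n) ℝ) :=
  ⟨fun c => (continuous_mul_left c).measurable, fun c => (continuous_mul_right c).measurable⟩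

namespace HaarTraceSqAux

variable {n : ℕ}

lemma entry_continuous (i j : Fin n) :
    Continuous fun Y : Matrix.orthogonalGroup (Fin n) ℝ =>
      (Y : Matrix (Fin n) (Fin n) ℝ) i j := by
  have h : Continuous fun M : Matrix (Fin n) (Fin n) ℝ => M i j :=
    (continuous_apply j).comp (continuous_apply i)
  exact h.comp continuous_subtype_val

lemma col_sum_sq (Y : Matrix.orthogonalGroup (Fin n) ℝ) (j : Fin n) :
    ∑ k, (Y : Matrix (Fin n) (Fin n) ℝ) k j * (Y : Matrix (Fin n) (Fin n) ℝ) k j = 1 := by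
  have h : star (Y : Matrix (Fin n) (Fin n) ℝ) * (Y : Matrix (Fin n) (Fin n) ℝ) = 1 := Y.2.1
  have h2 := congrFun (congrFun h j) j
  simpa [Matrix.mul_apply, Matrix.one_apply, Matrix.star_apply] using h2

lemma entry_abs_le (Y : Matrix.orthogonalGroup (Fin n) ℝ) (i j : Fin n) :
    |(Y : Matrix (Fin n) (Fin n) ℝ) i j| ≤ 1 := by
  rw [abs_le_one_iff_mul_self_le_one]
  calc (Y : Matrix (Fin n) (Fin n) ℝ) i j * (Y : Matrix (Fin n) (Fin n) ℝ) i j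
      ≤ ∑ k, (Y : Matrix (Fin n) (Fin n) ℝ) k j * (Y : Matrix (Fin n) (Fin n) ℝ) k j :=
        Finset.single_le_sum (f := fun k => (Y : Matrix (Fin n) (Fin n) ℝ) k j * (Y : Matrix (Fin n) (Fin n) ℝ) k j)
          (fun k _ => mul_self_nonneg _) (Finset.mem_univ i)
    _ = 1 := col_sum_sq Y j

lemma integrable_prod (μ : Measure (Matrix.orthogonalGroup (Fin n) ℝ))
    [IsProbabilityMeasure μ] (i j k l : Fin n) :
    Integrable (fun Y : Matrix.orthogonalGroup (Fin n) ℝ =>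
      (Y : Matrix (Fin n) (Fin n) ℝ) i j * (Y : Matrix (Fin n) (Fin n) ℝ) k l) μ := by
  refine Integrable.mono' (integrable_const 1)
    (((entry_continuous i j).mul (entry_continuous k l)).aestronglyMeasurable) ?_
  filter_upwards with Y
  rw [Real.norm_eq_abs, abs_mul]
  exact mul_le_one₀ (entry_abs_le Y i j) (abs_nonneg _) (entry_abs_le Y k l)

lemma offdiag_zero (μ : Measure (Matrix.orthogonalGroup (Fin n) ℝ)) [μ.IsHaarMeasure]
    (i j : Fin n) (hij : j ≠ i) :
    ∫ Y : Matrix.orthogonalGroup (Fin n) ℝ,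
      (Y : Matrix (Fin n) (Fin n) ℝ) i j * (Y : Matrix (Fin n) (Fin n) ℝ) j i ∂μ = 0 := by
  set d : Fin n → ℝ := fun k => if k = i then -1 else 1 with hd
  have hmem : Matrix.diagonal d ∈ Matrix.orthogonalGroup (Fin n) ℝ := by
    rw [Matrix.mem_orthogonalGroup_iff]
    have hstar : star (Matrix.diagonal d) = Matrix.diagonal d := by
      simp [Matrix.star_eq_conjTranspose, Matrix.diagonal_conjTranspose]
    rw [Matrix.diagonal_transpose, Matrix.diagonal_mul_diagonal]
    rw [show (fun k => d k * d k) = fun _ => (1 : ℝ) from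
      funext fun k => by by_cases h : k = i <;> simp [hd, h]]
    exact Matrix.diagonal_one
  set g : Matrix.orthogonalGroup (Fin n) ℝ := ⟨Matrix.diagonal d, hmem⟩ with hg
  have h := integral_mul_left_eq_self (μ := μ)
      (fun Y : Matrix.orthogonalGroup (Fin n) ℝ =>
        (Y : Matrix (Fin n) (Fin n) ℝ) i j * (Y : Matrix (Fin n) (Fin n) ℝ) j i) g
  have heq : ∀ Y : Matrix.orthogonalGroup (Fin n) ℝ,
      ((g * Y : Matrix.orthogonalGroup (Fin n) ℝ) : Matrix (Fin n) (Fin n) ℝ) i j *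
        ((g * Y : Matrix.orthogonalGroup (Fin n) ℝ) : Matrix (Fin n) (Fin n) ℝ) j i
      = -((Y : Matrix (Fin n) (Fin n) ℝ) i j * (Y : Matrix (Fin n) (Fin n) ℝ) j i) := by
    intro Y
    have hcoe : ((g * Y : Matrix.orthogonalGroup (Fin n) ℝ) : Matrix (Fin n) (Fin n) ℝ)
        = Matrix.diagonal d * (Y : Matrix (Fin n) (Fin n) ℝ) := rfl
    rw [hcoe, Matrix.diagonal_mul, Matrix.diagonal_mul]
    have hdi : d i = -1 := by simp [hd]
    have hdj : d j = 1 := by simp [hd, hij]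
    rw [hdi, hdj]; ring
  rw [show (fun Y : Matrix.orthogonalGroup (Fin n) ℝ =>
        ((g * Y : Matrix.orthogonalGroup (Fin n) ℝ) : Matrix (Fin n) (Fin n) ℝ) i j *
          ((g * Y : Matrix.orthogonalGroup (Fin n) ℝ) : Matrix (Fin n) (Fin n) ℝ) j i)
      = fun Y : Matrix.orthogonalGroup (Fin n) ℝ =>
        -((Y : Matrix (Fin n) (Fin n) ℝ) i j * (Y : Matrix (Fin n) (Fin n) ℝ) j i)
      from funext heq, integral_neg] at h
  linarith

lemma diag_swap (μ : Measure (Matrix.orthogonalGroup (Fin n) ℝ)) [μ.IsHaarMeasure]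
    (i k : Fin n) :
    ∫ Y : Matrix.orthogonalGroup (Fin n) ℝ,
        (Y : Matrix (Fin n) (Fin n) ℝ) i i * (Y : Matrix (Fin n) (Fin n) ℝ) i i ∂μ
      = ∫ Y : Matrix.orthogonalGroup (Fin n) ℝ,
        (Y : Matrix (Fin n) (Fin n) ℝ) k i * (Y : Matrix (Fin n) (Fin n) ℝ) k i ∂μ := by
  set σ : Equiv.Perm (Fin n) := Equiv.swap i k with hσ
  have hmem : (σ.permMatrix ℝ) ∈ Matrix.orthogonalGroup (Fin n) ℝ := by
    rw [Matrix.mem_orthogonalGroup_iff]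
    have hstar : star (σ.permMatrix ℝ)
        = ((σ.symm.toPEquiv.toMatrix : Matrix (Fin n) (Fin n) ℝ)) := by
      rw [Matrix.star_eq_conjTranspose]
      rw [show (σ.permMatrix ℝ)ᴴ = (σ.permMatrix ℝ)ᵀ by
        ext a b; simp [Matrix.conjTranspose_apply]]
      rw [← PEquiv.toMatrix_symm, ← Equiv.toPEquiv_symm]
    rw [show (σ.permMatrix ℝ)ᵀ = star (σ.permMatrix ℝ) by
      ext a b; simp [Matrix.star_apply], hstar]
    show (σ.toPEquiv.toMatrix : Matrix (Fin n) (Fin n) ℝ) * σ.symm.toPEquiv.toMatrix = 1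
    rw [← PEquiv.toMatrix_trans, ← Equiv.toPEquiv_trans]
    simp
  set g : Matrix.orthogonalGroup (Fin n) ℝ := ⟨σ.permMatrix ℝ, hmem⟩ with hg
  have h := integral_mul_left_eq_self (μ := μ)
      (fun Y : Matrix.orthogonalGroup (Fin n) ℝ =>
        (Y : Matrix (Fin n) (Fin n) ℝ) i i * (Y : Matrix (Fin n) (Fin n) ℝ) i i) g
  have heq : ∀ Y : Matrix.orthogonalGroup (Fin n) ℝ,
      ((g * Y : Matrix.orthogonalGroup (Fin n) ℝ) : Matrix (Fin n) (Fin n) ℝ) i i *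
        ((g * Y : Matrix.orthogonalGroup (Fin n) ℝ) : Matrix (Fin n) (Fin n) ℝ) i i
      = (Y : Matrix (Fin n) (Fin n) ℝ) k i * (Y : Matrix (Fin n) (Fin n) ℝ) k i := by
    intro Y
    have hcoe : ((g * Y : Matrix.orthogonalGroup (Fin n) ℝ) : Matrix (Fin n) (Fin n) ℝ)
        = σ.permMatrix ℝ * (Y : Matrix (Fin n) (Fin n) ℝ) := rfl
    rw [hcoe, show (σ.permMatrix ℝ) * (Y : Matrix (Fin n) (Fin n) ℝ)
        = (Y : Matrix (Fin n) (Fin n) ℝ).submatrix σ id from PEquiv.toMatrix_toPEquiv_mul σ _]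
    simp [hσ, Matrix.submatrix_apply]
  rw [show (fun Y : Matrix.orthogonalGroup (Fin n) ℝ =>
        ((g * Y : Matrix.orthogonalGroup (Fin n) ℝ) : Matrix (Fin n) (Fin n) ℝ) i i *
          ((g * Y : Matrix.orthogonalGroup (Fin n) ℝ) : Matrix (Fin n) (Fin n) ℝ) i i)
      = fun Y : Matrix.orthogonalGroup (Fin n) ℝ =>
        (Y : Matrix (Fin n) (Fin n) ℝ) k i * (Y : Matrix (Fin n) (Fin n) ℝ) k i
      from funext heq] at h
  exact h.symm

end HaarTraceSqAux

open HaarTraceSqAux in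
/-- **Haar average of `Tr(Y²)` over the orthogonal group.**
If `μ` is the Haar probability measure on the compact group `O(n)` (`n ≥ 1`),
then `∫ Tr(Y²) dμ(Y) = 1`. -/
theorem haar_integral_trace_sq_orthogonalGroup
    (n : ℕ) (hn : 1 ≤ n)
    (μ : Measure (Matrix.orthogonalGroup (Fin n) ℝ))
    [μ.IsHaarMeasure] [IsProbabilityMeasure μ] :
    ∫ Y, ((Y : Matrix (Fin n) (Fin n) ℝ) * (Y : Matrix (Fin n) (Fin n) ℝ)).trace ∂μ = 1 := by
  classical
  have hn0 : (n : ℝ) ≠ 0 := Nat.cast_ne_zero.mpr (by omega)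
  have hint : ∀ i j k l : Fin n,
      Integrable (fun Y : Matrix.orthogonalGroup (Fin n) ℝ =>
        (Y : Matrix (Fin n) (Fin n) ℝ) i j * (Y : Matrix (Fin n) (Fin n) ℝ) k l) μ :=
    fun i j k l => integrable_prod μ i j k l
  have h1 : ∫ Y, ((Y : Matrix (Fin n) (Fin n) ℝ) * (Y : Matrix (Fin n) (Fin n) ℝ)).trace ∂μ
      = ∑ i, ∑ j, ∫ Y : Matrix.orthogonalGroup (Fin n) ℝ,
          (Y : Matrix (Fin n) (Fin n) ℝ) i j * (Y : Matrix (Fin n) (Fin n) ℝ) j i ∂μ := by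
    rw [show (fun Y : Matrix.orthogonalGroup (Fin n) ℝ =>
          ((Y : Matrix (Fin n) (Fin n) ℝ) * (Y : Matrix (Fin n) (Fin n) ℝ)).trace)
        = fun Y : Matrix.orthogonalGroup (Fin n) ℝ =>
          ∑ i, ∑ j, (Y : Matrix (Fin n) (Fin n) ℝ) i j * (Y : Matrix (Fin n) (Fin n) ℝ) j i from
      funext fun Y => by simp [Matrix.trace, Matrix.diag, Matrix.mul_apply]]
    rw [integral_finset_sum _
      (fun i _ => integrable_finset_sum _ (fun j _ => hint i j j i))]
    exact Finset.sum_congr rfl fun i _ => integral_finset_sum _ fun j _ => hint i j j i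
  have hdiag : ∀ i : Fin n,
      ∫ Y : Matrix.orthogonalGroup (Fin n) ℝ,
        (Y : Matrix (Fin n) (Fin n) ℝ) i i * (Y : Matrix (Fin n) (Fin n) ℝ) i i ∂μ
      = (n : ℝ)⁻¹ := by
    intro i
    have hsum : ∑ k : Fin n, ∫ Y : Matrix.orthogonalGroup (Fin n) ℝ,
        (Y : Matrix (Fin n) (Fin n) ℝ) k i * (Y : Matrix (Fin n) (Fin n) ℝ) k i ∂μ = 1 := by
      rw [← integral_finset_sum _ (fun k _ => hint k i k i)]
      rw [show (fun Y : Matrix.orthogonalGroup (Fin n) ℝ =>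
            ∑ k, (Y : Matrix (Fin n) (Fin n) ℝ) k i * (Y : Matrix (Fin n) (Fin n) ℝ) k i)
          = fun _ => (1 : ℝ) from funext fun Y => col_sum_sq Y i]
      simp
    rw [Finset.sum_congr rfl (fun k _ => (diag_swap μ i k).symm), Finset.sum_const,
      Finset.card_univ, Fintype.card_fin, nsmul_eq_mul] at hsum
    field_simp at hsum ⊢
    linarith
  have h2 : ∀ i ∈ (Finset.univ : Finset (Fin n)),
      (∑ j, ∫ Y : Matrix.orthogonalGroup (Fin n) ℝ,
        (Y : Matrix (Fin n) (Fin n) ℝ) i j * (Y : Matrix (Fin n) (Fin n) ℝ) j i ∂μ)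
      = (n : ℝ)⁻¹ := by
    intro i _
    rw [Finset.sum_eq_single i (fun j _ hji => offdiag_zero μ i j hji) (by simp)]
    exact hdiag i
  rw [h1, Finset.sum_congr rfl h2]
  simp [Finset.sum_const, Finset.card_univ, Fintype.card_fin, nsmul_eq_mul,
    mul_inv_cancel₀ hn0]
end
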